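/- Every permutation π appearing in Ψ*(T_1) * Ψ*(T_2), where T_1 ∈ Y_k and T_2 ∈ Y_l, has Up-Down sequence equal to either Q(T_1) followed by +1 followed by Q(T_2), or Q(T_1) followed by −1 followed by Q(T_2). -/

import Mathlib

open Equiv

/-- `σ` is the standardization of the tuple `u`: it preserves relative order. -/
def IsStd {k : ℕ} {α : Type*} [LinearOrder α] (u : Fin k → α) (σ : Equiv.Perm (Fin k)) : Prop :=
  ∀ i j, σ i < σ j ↔ u i < u j

/-- The permutation `σ|_A . τ|_B` (concatenation), where `B = Aᶜ`: the first `k` values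
are the elements of `A` arranged in the relative order prescribed by `σ`, and the last
`l` values are the elements of `Aᶜ` arranged in the relative order prescribed by `τ`. -/
def concatPerm {k l : ℕ} (σ : Equiv.Perm (Fin k)) (τ : Equiv.Perm (Fin l))
    (A : Finset (Fin (k + l))) (hA : A.card = k) : Equiv.Perm (Fin (k + l)) :=
  finSumFinEquiv.symm.trans
    ((Equiv.sumCongr (σ.trans (A.orderIsoOfFin hA).toEquiv)
        (τ.trans ((Aᶜ).orderIsoOfFin
          (by rw [Finset.card_compl, hA, Fintype.card_fin]; omega)).toEquiv)).trans
      ((Equiv.sumCongr (Equiv.refl _)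
          (Equiv.subtypeEquivRight (fun x => Finset.mem_compl))).trans
        (Equiv.sumCompl (· ∈ A))))

/-- The Malvenuto–Reutenauer product `σ * τ`, as the multiset of its summands:
`σ * τ = Σ_{A ⊔ B = {1,…,k+l}, |A| = k} σ|_A . τ|_B`. -/
def mrProd {k l : ℕ} (σ : Equiv.Perm (Fin k)) (τ : Equiv.Perm (Fin l)) :
    Multiset (Equiv.Perm (Fin (k + l))) :=
  (Finset.univ.filter (fun A : Finset (Fin (k + l)) => A.card = k)).attach.val.map
    (fun A => concatPerm σ τ A.1 (by have h := A.2; simp only [Finset.mem_filter] at h; exact h.2))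

/-- Auxiliary recursion (on a fuel bounding the length): the unlabeled binary tree of a
word of distinct integers, obtained by putting the position of the minimum at the root,
with left subtree built from the prefix before the minimum and right subtree from the
suffix after it. -/
def shapeOfAux : ℕ → List ℕ → Tree Unit
  | 0, _ => Tree.nil
  | fuel + 1, l =>
    if l = [] then Tree.nil
    else
      let m := l.min?.getD 0
      let i := l.idxOf m
      Tree.node () (shapeOfAux fuel (l.take i)) (shapeOfAux fuel (l.drop (i + 1)))

/-- The unlabeled binary tree underlying the increasing binary tree of a word. -/
def shapeOfList (l : List ℕ) : Tree Unit := shapeOfAux l.length l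

/-- `Ψ : S_n → Y_n` sends a permutation to the underlying unlabeled binary tree of its
increasing binary tree. -/
def Psi {n : ℕ} (σ : Equiv.Perm (Fin n)) : Tree Unit :=
  shapeOfList (List.ofFn fun i => (σ i : ℕ))

/-- `Ψ*(T) = Σ_{σ : Ψ(σ) = T} σ`, as the multiset of its summands. -/
def PsiStar (n : ℕ) (T : Tree Unit) : Multiset (Equiv.Perm (Fin n)) :=
  (Finset.univ.filter (fun σ : Equiv.Perm (Fin n) => Psi σ = T)).val

/-- The bilinear extension of the Malvenuto–Reutenauer product to formal sums
(multisets) of permutations. -/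
def mrProdSum {k l : ℕ} (s : Multiset (Equiv.Perm (Fin k))) (t : Multiset (Equiv.Perm (Fin l))) :
    Multiset (Equiv.Perm (Fin (k + l))) :=
  s.bind fun σ => t.bind fun τ => mrProd σ τ


lemma min_facts (l : List ℕ) (hl : l ≠ []) :
    l.min?.getD 0 ∈ l ∧ ∀ b ∈ l, l.min?.getD 0 ≤ b := by
  have hs : l.min?.isSome := by
    rw [Option.isSome_iff_ne_none]
    simp [List.min?_eq_none_iff, hl]
  obtain ⟨a, ha⟩ := Option.isSome_iff_exists.mp hs
  rw [ha]
  simp only [Option.getD_some]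
  exact ⟨List.min?_mem ha,
    fun b hb => ((List.le_min?_iff ha).mp le_rfl) b hb⟩

lemma indexOf_min_lt (l : List ℕ) (hl : l ≠ []) :
    l.idxOf (l.min?.getD 0) < l.length :=
  List.idxOf_lt_length_iff.mpr (min_facts l hl).1

lemma shapeOfAux_congr : ∀ f f' (l : List ℕ), l.length ≤ f → l.length ≤ f' →
    shapeOfAux f l = shapeOfAux f' l := by
  intro f
  induction f with
  | zero =>
    intro f' l h h'
    have : l = [] := List.length_eq_zero_iff.mp (Nat.le_zero.mp h)
    subst this
    cases f' <;> simp [shapeOfAux]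
  | succ f ih =>
    intro f' l h h'
    rcases eq_or_ne l [] with rfl | hl
    · cases f' <;> simp [shapeOfAux]
    · obtain ⟨f', rfl⟩ : ∃ g, f' = g + 1 := by
        cases f' with
        | zero => exact absurd (List.length_eq_zero_iff.mp (Nat.le_zero.mp h')) hl
        | succ g => exact ⟨g, rfl⟩
      have hidx := indexOf_min_lt l hl
      simp only [shapeOfAux, if_neg hl]
      have t1 : (l.take (l.idxOf (l.min?.getD 0))).length ≤ f := by
        rw [List.length_take]; omega
      have t1' : (l.take (l.idxOf (l.min?.getD 0))).length ≤ f' := by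
        rw [List.length_take]; omega
      have t2 : (l.drop (l.idxOf (l.min?.getD 0) + 1)).length ≤ f := by
        rw [List.length_drop]; omega
      have t2' : (l.drop (l.idxOf (l.min?.getD 0) + 1)).length ≤ f' := by
        rw [List.length_drop]; omega
      rw [ih f' _ t1 t1', ih f' _ t2 t2']

lemma shapeOfList_ne_nil (l : List ℕ) (hl : l ≠ []) :
    shapeOfList l = Tree.node () (shapeOfList (l.take (l.idxOf (l.min?.getD 0))))
      (shapeOfList (l.drop (l.idxOf (l.min?.getD 0) + 1))) := by
  have hpos : 0 < l.length := List.length_pos_iff.mpr hl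
  obtain ⟨n, hn⟩ : ∃ n, l.length = n + 1 := ⟨l.length - 1, by omega⟩
  have hidx := indexOf_min_lt l hl
  rw [shapeOfList, hn]
  simp only [shapeOfAux, if_neg hl]
  rw [shapeOfList, shapeOfList]
  congr 1
  all_goals apply shapeOfAux_congr <;> simp [List.length_take, List.length_drop] <;> omega

lemma numNodes_shapeOfList : ∀ n (l : List ℕ), l.length ≤ n →
    (shapeOfList l).numNodes = l.length := by
  intro n
  induction n with
  | zero =>
    intro l h
    have : l = [] := List.length_eq_zero_iff.mp (Nat.le_zero.mp h)
    subst this; rfl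
  | succ n ih =>
    intro l h
    rcases eq_or_ne l [] with rfl | hl
    · rfl
    · have hidx := indexOf_min_lt l hl
      rw [shapeOfList_ne_nil l hl]
      simp only [Tree.numNodes, Tree.node, BinaryTree.numNodes]
      simp only [Tree.numNodes] at ih
      rw [ih _ (by rw [List.length_take]; omega), ih _ (by rw [List.length_drop]; omega)]
      rw [List.length_take, List.length_drop]
      omega

lemma shape_updown : ∀ n (l₁ l₂ : List ℕ), l₁.length ≤ n → l₁.Nodup → l₂.Nodup →
    shapeOfList l₁ = shapeOfList l₂ →
    ∀ (i : ℕ) (hi : i + 1 < l₁.length) (hi' : i + 1 < l₂.length),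
      (l₁[i] < l₁[i+1] ↔ l₂[i] < l₂[i+1]) := by
  intro n
  induction n with
  | zero => intro l₁ l₂ h _ _ _ i hi _; omega
  | succ n ih =>
    intro l₁ l₂ hn hd₁ hd₂ hs i hi hi'
    have hl₁ : l₁ ≠ [] := by intro h; subst h; simp at hi
    have hl₂ : l₂ ≠ [] := by intro h; subst h; simp at hi'
    set p₁ := l₁.idxOf (l₁.min?.getD 0) with hp₁
    set p₂ := l₂.idxOf (l₂.min?.getD 0) with hp₂
    have hidx₁ : p₁ < l₁.length := indexOf_min_lt l₁ hl₁
    have hidx₂ : p₂ < l₂.length := indexOf_min_lt l₂ hl₂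
    rw [shapeOfList_ne_nil l₁ hl₁, shapeOfList_ne_nil l₂ hl₂] at hs
    simp only [Tree.node, BinaryTree.node.injEq] at hs
    obtain ⟨-, hsl, hsr⟩ := hs
    -- p₁ = p₂
    have hpeq : p₁ = p₂ := by
      have e1 := numNodes_shapeOfList (l₁.take p₁).length _ le_rfl
      have e2 := numNodes_shapeOfList (l₂.take p₂).length _ le_rfl
      rw [hsl, e2] at e1
      rw [List.length_take, List.length_take] at e1
      omega
    -- min value facts
    have hmin₁ : ∀ p q (hp : p < l₁.length) (hq : q < l₁.length), p = p₁ → q ≠ p₁ →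
        l₁[p] < l₁[q] := by
      intro p q hp hq hpp hqp
      have hpv : l₁[p] = l₁.min?.getD 0 := by
        subst hpp; exact List.getElem_idxOf hidx₁
      have hle : l₁[p] ≤ l₁[q] := hpv ▸ (min_facts l₁ hl₁).2 _ (List.getElem_mem _)
      rcases hle.lt_or_eq with h | h
      · exact h
      · exact absurd ((hd₁.getElem_inj_iff).mp h) (by omega)
    have hmin₂ : ∀ p q (hp : p < l₂.length) (hq : q < l₂.length), p = p₂ → q ≠ p₂ →
        l₂[p] < l₂[q] := by
      intro p q hp hq hpp hqp
      have hpv : l₂[p] = l₂.min?.getD 0 := by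
        subst hpp; exact List.getElem_idxOf hidx₂
      have hle : l₂[p] ≤ l₂[q] := hpv ▸ (min_facts l₂ hl₂).2 _ (List.getElem_mem _)
      rcases hle.lt_or_eq with h | h
      · exact h
      · exact absurd ((hd₂.getElem_inj_iff).mp h) (by omega)
    rcases lt_trichotomy (i+1) p₁ with hc | hc | hc
    · -- both in left part
      have ht₁ : i + 1 < (l₁.take p₁).length := by rw [List.length_take]; omega
      have ht₂ : i + 1 < (l₂.take p₂).length := by rw [List.length_take]; omega
      have := ih (l₁.take p₁) (l₂.take p₂) (by rw [List.length_take]; omega)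
        (hd₁.sublist (List.take_sublist _ _)) (hd₂.sublist (List.take_sublist _ _))
        hsl i ht₁ ht₂
      simpa only [List.getElem_take] using this
    · -- i + 1 = p₁ : both descents
      exact iff_of_false
        (not_lt.mpr (hmin₁ (i+1) i (by omega) (by omega) hc (by omega)).le)
        (not_lt.mpr (hmin₂ (i+1) i (by omega) (by omega) (by omega) (by omega)).le)
    · rcases Nat.eq_or_lt_of_le (show p₁ ≤ i by omega) with hc2 | hc2
      · -- i = p₁ : both ascents
        have hip : i = p₁ := hc2.symm
        exact iff_of_true
          (hmin₁ i (i+1) (by omega) (by omega) hip (by omega))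
          (hmin₂ i (i+1) (by omega) (by omega) (by omega) (by omega))
      · -- both in right part
        set j := i - (p₁ + 1) with hj
        have hij : i = p₁ + 1 + j := by omega
        have hd₁' : j + 1 < (l₁.drop (p₁+1)).length := by rw [List.length_drop]; omega
        have hd₂' : j + 1 < (l₂.drop (p₂+1)).length := by rw [List.length_drop]; omega
        have := ih (l₁.drop (p₁+1)) (l₂.drop (p₂+1)) (by rw [List.length_drop]; omega)
          (hd₁.sublist (List.drop_sublist _ _)) (hd₂.sublist (List.drop_sublist _ _))
          hsr j hd₁' hd₂'
        rw [List.getElem_drop, List.getElem_drop, List.getElem_drop, List.getElem_drop] at this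
        convert this using 3 <;> omega

lemma psi_updown {n : ℕ} (σ σ' : Equiv.Perm (Fin n)) (h : Psi σ = Psi σ')
    (i : ℕ) (hi : i + 1 < n) :
    (σ ⟨i, by omega⟩ < σ ⟨i+1, hi⟩ ↔ σ' ⟨i, by omega⟩ < σ' ⟨i+1, hi⟩) := by
  have hnd : ∀ (ρ : Equiv.Perm (Fin n)), (List.ofFn fun x => ((ρ x : ℕ))).Nodup :=
    fun ρ => List.nodup_ofFn.mpr (Fin.val_injective.comp ρ.injective)
  have hlen : ∀ (ρ : Equiv.Perm (Fin n)), (List.ofFn fun x => ((ρ x : ℕ))).length = n :=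
    fun _ => List.length_ofFn
  unfold Psi at h
  have key := shape_updown (List.ofFn fun x => ((σ x : ℕ))).length _ _ le_rfl
    (hnd σ) (hnd σ') h i (by rw [hlen]; omega) (by rw [hlen]; omega)
  rw [List.getElem_ofFn, List.getElem_ofFn, List.getElem_ofFn, List.getElem_ofFn] at key
  rw [Fin.lt_def, Fin.lt_def]
  exact key

lemma concatPerm_left {k l : ℕ} (σ : Equiv.Perm (Fin k)) (τ : Equiv.Perm (Fin l))
    (A : Finset (Fin (k + l))) (hA : A.card = k) (i : Fin k) :
    concatPerm σ τ A hA (Fin.castAdd l i) = ↑(A.orderIsoOfFin hA (σ i)) := by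
  simp [concatPerm]

lemma concatPerm_right {k l : ℕ} (σ : Equiv.Perm (Fin k)) (τ : Equiv.Perm (Fin l))
    (A : Finset (Fin (k + l))) (hA : A.card = k) (j : Fin l) :
    concatPerm σ τ A hA (Fin.natAdd k j) =
      ↑((Aᶜ).orderIsoOfFin (by rw [Finset.card_compl, hA, Fintype.card_fin]; omega) (τ j)) := by
  simp [concatPerm]

/-- Every permutation `π` appearing in `Ψ*(T₁) * Ψ*(T₂)` has Up-Down sequence
`Q(T₁) · (±1) · Q(T₂)`: its Up-Down sequence agrees with the canopy `Q(T₁)` on the first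
`k - 1` positions and with the canopy `Q(T₂)` on the last `l - 1` positions (position
`k` being free, i.e. `+1` or `−1`).  The canopies are represented by the common Up-Down
sequences of arbitrary permutations `σ₁, σ₂` projecting to `T₁, T₂` under `Ψ`. -/
theorem updown_of_mem_psiStar_mul {k l : ℕ} (T₁ T₂ : Tree Unit)
    (h₁ : T₁.numNodes = k) (h₂ : T₂.numNodes = l)
    (π : Equiv.Perm (Fin (k + l))) (hπ : π ∈ mrProdSum (PsiStar k T₁) (PsiStar l T₂))
    (σ₁ : Equiv.Perm (Fin k)) (hσ₁ : Psi σ₁ = T₁)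
    (σ₂ : Equiv.Perm (Fin l)) (hσ₂ : Psi σ₂ = T₂) :
    (∀ i : ℕ, (hi : i + 1 < k) →
      (π ⟨i, by omega⟩ < π ⟨i + 1, by omega⟩ ↔
        σ₁ ⟨i, Nat.lt_of_succ_lt hi⟩ < σ₁ ⟨i + 1, hi⟩)) ∧
    (∀ j : ℕ, (hj : j + 1 < l) →
      (π ⟨k + j, by omega⟩ < π ⟨k + j + 1, by omega⟩ ↔
        σ₂ ⟨j, Nat.lt_of_succ_lt hj⟩ < σ₂ ⟨j + 1, hj⟩)) := by
  obtain ⟨σ, hσ, hrest⟩ := Multiset.mem_bind.mp hπ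
  obtain ⟨τ, hτ, hmem⟩ := Multiset.mem_bind.mp hrest
  have hψσ : Psi σ = T₁ := by
    have := hσ; rw [PsiStar, ← Finset.mem_def, Finset.mem_filter] at this; exact this.2
  have hψτ : Psi τ = T₂ := by
    have := hτ; rw [PsiStar, ← Finset.mem_def, Finset.mem_filter] at this; exact this.2
  obtain ⟨a, _, heq⟩ := Multiset.mem_map.mp hmem
  have hA : a.1.card = k := by
    have h := a.2; simp only [Finset.mem_filter] at h; exact h.2
  constructor
  · intro i hi
    have e1 : π ⟨i, by omega⟩ = ↑(a.1.orderIsoOfFin hA (σ ⟨i, Nat.lt_of_succ_lt hi⟩)) := by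
      rw [← heq]; exact concatPerm_left σ τ a.1 hA ⟨i, Nat.lt_of_succ_lt hi⟩
    have e2 : π ⟨i + 1, by omega⟩ = ↑(a.1.orderIsoOfFin hA (σ ⟨i + 1, hi⟩)) := by
      rw [← heq]; exact concatPerm_left σ τ a.1 hA ⟨i + 1, hi⟩
    rw [e1, e2, Subtype.coe_lt_coe, OrderIso.lt_iff_lt]
    exact psi_updown σ σ₁ (by rw [hψσ, hσ₁]) i hi
  · intro j hj
    have hA' : (a.1ᶜ).card = l := by
      rw [Finset.card_compl, hA, Fintype.card_fin]; omega
    have e1 : π ⟨k + j, by omega⟩ = ↑((a.1ᶜ).orderIsoOfFin hA' (τ ⟨j, Nat.lt_of_succ_lt hj⟩)) := by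
      rw [← heq]; exact concatPerm_right σ τ a.1 hA ⟨j, Nat.lt_of_succ_lt hj⟩
    have e2 : π ⟨k + j + 1, by omega⟩ = ↑((a.1ᶜ).orderIsoOfFin hA' (τ ⟨j + 1, hj⟩)) := by
      rw [← heq]
      have : (⟨k + j + 1, by omega⟩ : Fin (k + l)) = Fin.natAdd k ⟨j + 1, hj⟩ := rfl
      rw [this]; exact concatPerm_right σ τ a.1 hA ⟨j + 1, hj⟩
    rw [e1, e2, Subtype.coe_lt_coe, OrderIso.lt_iff_lt]
    exact psi_updown τ σ₂ (by rw [hψτ, hσ₂]) j hj
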